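/- (Carnot ratio, differential form.) Let h(p) = -p·log₂(p) - (1-p)·log₂(1-p) be the base-2 binary entropy, and let t₁, t₂ be reals with 0 < t₂ < 1/2 and 0 < t₁ < 1. Let Δ : ℝ → ℝ satisfy Δ(0) = 0, Δ continuous at 0, and h(t₁ - ε) + h(t₂ + Δ(ε)) = h(t₁) + h(t₂) for all ε in some neighborhood of 0. Then Δ is differentiable at 0 with derivative Δ'(0) = h'(t₁)/h'(t₂) = log₂((1-t₁)/t₁) / log₂((1-t₂)/t₂). That is, the fraction Δ₂ of energy units that must be deposited in the cold bath per unit Δ₁ withdrawn from the hot bath, to first order, equals the ratio of the inverse statistical temperatures 1/T_stat(t₁) and 1/T_stat(t₂). -/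

import Mathlib

open Filter

/-- The base-2 binary entropy function. -/
noncomputable def binEnt (p : ℝ) : ℝ :=
  -(p * Real.logb 2 p) - (1 - p) * Real.logb 2 (1 - p)

lemma binEnt_hasStrictDerivAt {p : ℝ} (h0 : 0 < p) (h1 : p < 1) :
    HasStrictDerivAt binEnt (Real.logb 2 ((1 - p) / p)) p := by
  have h1' : (0:ℝ) < 1 - p := by linarith
  have hA : HasStrictDerivAt (fun x : ℝ => x * Real.log x) (Real.log p + 1) p := by
    have := (hasStrictDerivAt_id p).mul (Real.hasStrictDerivAt_log h0.ne')
    simpa [mul_inv_cancel₀ h0.ne', Pi.mul_def] using this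
  have hB : HasStrictDerivAt (fun x : ℝ => (1 - x) * Real.log (1 - x))
      (-(Real.log (1 - p) + 1)) p := by
    have hu : HasStrictDerivAt (fun x : ℝ => 1 - x) (-1) p := by
      simpa [Pi.sub_def] using (hasStrictDerivAt_const p (1:ℝ)).sub (hasStrictDerivAt_id p)
    have hA' : HasStrictDerivAt (fun u : ℝ => u * Real.log u) (Real.log (1 - p) + 1) (1 - p) := by
      have := (hasStrictDerivAt_id (1 - p)).mul (Real.hasStrictDerivAt_log h1'.ne')
      simpa [mul_inv_cancel₀ h1'.ne', Pi.mul_def] using this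
    have := hA'.comp p hu
    simpa [mul_comm, Function.comp_def] using this
  have hC : HasStrictDerivAt (fun x : ℝ => (-(x * Real.log x) - (1 - x) * Real.log (1 - x))
      * (Real.log 2)⁻¹)
      ((-(Real.log p + 1) - -(Real.log (1 - p) + 1)) * (Real.log 2)⁻¹) p :=
    ((hA.neg.sub hB)).mul_const _
  have heq : binEnt = fun x : ℝ => (-(x * Real.log x) - (1 - x) * Real.log (1 - x))
      * (Real.log 2)⁻¹ := by
    funext x
    simp [binEnt, Real.logb, div_eq_mul_inv]
    ring
  have hval : (-(Real.log p + 1) - -(Real.log (1 - p) + 1)) * (Real.log 2)⁻¹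
      = Real.logb 2 ((1 - p) / p) := by
    rw [Real.logb, Real.log_div h1'.ne' h0.ne']
    field_simp
    ring
  rw [heq, ← hval]
  exact hC

theorem carnot_ratio_differential (t₁ t₂ : ℝ) (ht₂0 : 0 < t₂) (ht₂ : t₂ < 1 / 2)
    (ht₁0 : 0 < t₁) (ht₁1 : t₁ < 1) (Δ : ℝ → ℝ) (hΔ0 : Δ 0 = 0)
    (hΔc : ContinuousAt Δ 0)
    (hrev : ∀ᶠ ε in nhds 0, binEnt (t₁ - ε) + binEnt (t₂ + Δ ε) = binEnt t₁ + binEnt t₂) :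
    HasDerivAt Δ (Real.logb 2 ((1 - t₁) / t₁) / Real.logb 2 ((1 - t₂) / t₂)) 0 := by
  have ht₂1 : t₂ < 1 := by linarith
  set d₁ := Real.logb 2 ((1 - t₁) / t₁)
  set d₂ := Real.logb 2 ((1 - t₂) / t₂)
  have hd₂pos : 0 < d₂ := by
    apply Real.logb_pos one_lt_two
    rw [lt_div_iff₀ ht₂0]
    linarith
  have hd₂ : d₂ ≠ 0 := hd₂pos.ne'
  have hf2 : HasStrictDerivAt binEnt d₂ t₂ := binEnt_hasStrictDerivAt ht₂0 ht₂1
  have hf1 : HasStrictDerivAt binEnt d₁ t₁ := binEnt_hasStrictDerivAt ht₁0 ht₁1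
  set g := hf2.localInverse binEnt d₂ t₂ hd₂ with hg
  have hginv : ∀ᶠ x in nhds t₂, g (binEnt x) = x :=
    (hf2.hasStrictFDerivAt_equiv hd₂).eventually_left_inverse
  have hgderiv : HasStrictDerivAt g d₂⁻¹ (binEnt t₂) := hf2.to_localInverse hd₂
  -- the auxiliary function
  set F : ℝ → ℝ := fun ε => g (binEnt t₁ + binEnt t₂ - binEnt (t₁ - ε)) - t₂ with hF
  -- Δ eventually equals F near 0
  have htend : Tendsto (fun ε => t₂ + Δ ε) (nhds 0) (nhds t₂) := by
    have : ContinuousAt (fun ε => t₂ + Δ ε) 0 := continuousAt_const.add hΔc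
    simpa [hΔ0] using this.tendsto
  have hev : ∀ᶠ ε in nhds 0, Δ ε = F ε := by
    filter_upwards [hrev, htend.eventually hginv] with ε h1 h2
    have : binEnt t₁ + binEnt t₂ - binEnt (t₁ - ε) = binEnt (t₂ + Δ ε) := by linarith
    simp only [hF, this, h2]
    ring
  -- F has the right derivative at 0
  have hinner : HasDerivAt (fun ε : ℝ => binEnt t₁ + binEnt t₂ - binEnt (t₁ - ε)) d₁ 0 := by
    have hsub : HasDerivAt (fun ε : ℝ => t₁ - ε) (-1) 0 := by
      simpa [Pi.sub_def] using (hasDerivAt_const (0:ℝ) t₁).sub (hasDerivAt_id 0)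
    have hf1' : HasDerivAt binEnt d₁ ((fun ε : ℝ => t₁ - ε) 0) := by
      simpa using hf1.hasDerivAt
    have h1 : HasDerivAt (fun ε : ℝ => binEnt (t₁ - ε)) (d₁ * (-1)) 0 := hf1'.comp 0 hsub
    have := (hasDerivAt_const (0:ℝ) (binEnt t₁ + binEnt t₂)).sub h1
    simpa [Pi.sub_def] using this
  have hFd : HasDerivAt F (d₂⁻¹ * d₁) 0 := by
    have hval0 : binEnt t₁ + binEnt t₂ - binEnt (t₁ - 0) = binEnt t₂ := by ring_nf
    have hgd : HasDerivAt g d₂⁻¹ (binEnt t₁ + binEnt t₂ - binEnt (t₁ - 0)) := by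
      rw [hval0]; exact hgderiv.hasDerivAt
    exact ((hgd.comp 0 hinner).sub_const t₂)
  have : HasDerivAt Δ (d₂⁻¹ * d₁) 0 := hFd.congr_of_eventuallyEq hev
  simpa [div_eq_inv_mul] using this
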